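/- arXiv:1801.04312 — 3 statements merged into one kernel-verified Lean document; each statement's English description precedes it below -/
import Mathlib

section
/- Let A be a ring and let M be a right A-module that admits both a minimal projective presentation p : P₁ → P₀ (with coker p ≅ M) and some presilting presentation. Then p is itself a presilting presentation of M. -/
universe u

open DirectSum

section Defs

variable {A : Type u} [Ring A]

/-- A class of modules is closed under isomorphisms. -/
def IsoClosed (𝒞 : ModuleCat.{u} A → Prop) : Prop :=
  ∀ (M N : ModuleCat.{u} A), (M ≃ₗ[A] N) → 𝒞 M → 𝒞 N

/-- A class of modules is closed under quotient modules (epimorphic images). -/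
def ClosedUnderQuotients (𝒞 : ModuleCat.{u} A → Prop) : Prop :=
  ∀ (M N : ModuleCat.{u} A) (f : M →ₗ[A] N), Function.Surjective f → 𝒞 M → 𝒞 N

/-- A class of modules is closed under extensions. -/
def ClosedUnderExtensions (𝒞 : ModuleCat.{u} A → Prop) : Prop :=
  ∀ (X Y Z : ModuleCat.{u} A) (f : X →ₗ[A] Y) (g : Y →ₗ[A] Z),
    Function.Injective f → Function.Surjective g →
    LinearMap.range f = LinearMap.ker g → 𝒞 X → 𝒞 Z → 𝒞 Y

/-- A class of modules is closed under arbitrary direct sums. -/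
def ClosedUnderDirectSums (𝒞 : ModuleCat.{u} A → Prop) : Prop :=
  ∀ (ι : Type u) (M : ι → ModuleCat.{u} A), (∀ i, 𝒞 (M i)) →
    𝒞 (ModuleCat.of A (⨁ i, (M i : Type u)))

/-- A class of modules is closed under arbitrary direct products. -/
def ClosedUnderProducts (𝒞 : ModuleCat.{u} A → Prop) : Prop :=
  ∀ (ι : Type u) (M : ι → ModuleCat.{u} A), (∀ i, 𝒞 (M i)) →
    𝒞 (ModuleCat.of A (∀ i, (M i : Type u)))

/-- A class of modules is closed under kernels of homomorphisms between its members. -/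
def ClosedUnderKernels (𝒞 : ModuleCat.{u} A → Prop) : Prop :=
  ∀ (M N : ModuleCat.{u} A) (f : M →ₗ[A] N), 𝒞 M → 𝒞 N →
    𝒞 (ModuleCat.of A (LinearMap.ker f))

/-- A class of modules is closed under cokernels of homomorphisms between its members. -/
def ClosedUnderCokernels (𝒞 : ModuleCat.{u} A → Prop) : Prop :=
  ∀ (M N : ModuleCat.{u} A) (f : M →ₗ[A] N), 𝒞 M → 𝒞 N →
    𝒞 (ModuleCat.of A ((N : Type u) ⧸ LinearMap.range f))

/-- A torsion class in Mod-A: an isomorphism-closed class of modules closed under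
quotients, extensions and arbitrary direct sums. -/
def IsTorsionClass (𝒯 : ModuleCat.{u} A → Prop) : Prop :=
  IsoClosed 𝒯 ∧ ClosedUnderQuotients 𝒯 ∧ ClosedUnderExtensions 𝒯 ∧ ClosedUnderDirectSums 𝒯

/-- `Gen 𝒞`: modules admitting a surjection from a direct sum of modules in `𝒞`. -/
def Gen (𝒞 : ModuleCat.{u} A → Prop) : ModuleCat.{u} A → Prop :=
  fun N => ∃ (ι : Type u) (M : ι → ModuleCat.{u} A)
    (f : (⨁ i, (M i : Type u)) →ₗ[A] N),
    (∀ i, 𝒞 (M i)) ∧ Function.Surjective f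

/-- `GenM T`: modules admitting a surjection from a direct sum of copies of `T`. -/
def GenM (T : ModuleCat.{u} A) : ModuleCat.{u} A → Prop :=
  fun N => ∃ (ι : Type u) (f : (ι →₀ (T : Type u)) →ₗ[A] N), Function.Surjective f

/-- `Filt 𝒞`: modules admitting an ordinal-indexed filtration whose consecutive factors
are isomorphic to modules in `𝒞`. -/
def Filt (𝒞 : ModuleCat.{u} A → Prop) : ModuleCat.{u} A → Prop :=
  fun M => ∃ (μ : Ordinal.{u}) (F : Ordinal.{u} → Submodule A M),
    Monotone F ∧ F 0 = ⊥ ∧ F μ = ⊤ ∧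
    (∀ ν ≤ μ, Order.IsSuccLimit ν → F ν = ⨆ (l : Ordinal.{u}) (_ : l < ν), F l) ∧
    (∀ l < μ, ∃ C : ModuleCat.{u} A, 𝒞 C ∧
      Nonempty ((↥(F (l + 1)) ⧸ (F l).comap (F (l + 1)).subtype) ≃ₗ[A] (C : Type u)))

/-- `FiltGen 𝒞 = Filt (Gen 𝒞)`. -/
def FiltGen (𝒞 : ModuleCat.{u} A → Prop) : ModuleCat.{u} A → Prop := Filt (Gen 𝒞)

/-- `aSub 𝒯 = 𝔞(𝒯)`: modules `X` in `𝒯` such that every homomorphism from a module of `𝒯`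
to `X` has kernel in `𝒯`. -/
def aSub (𝒯 : ModuleCat.{u} A → Prop) : ModuleCat.{u} A → Prop :=
  fun X => 𝒯 X ∧ ∀ (Y : ModuleCat.{u} A) (g : Y →ₗ[A] X), 𝒯 Y →
    𝒯 (ModuleCat.of A (LinearMap.ker g))

/-- A projective presentation `P →σ→ Q →π→ T → 0` of the module `T`. -/
structure ProjPres (T : ModuleCat.{u} A) where
  P : ModuleCat.{u} A
  Q : ModuleCat.{u} A
  σ : P →ₗ[A] Q
  π : Q →ₗ[A] T
  projP : Module.Projective A P
  projQ : Module.Projective A Q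
  exact : LinearMap.range σ = LinearMap.ker π
  surj : Function.Surjective π

/-- `Dclass σ = 𝒟_σ`: modules `X` such that `Hom(σ, X)` is surjective. -/
def Dclass {P Q : ModuleCat.{u} A} (σ : P →ₗ[A] Q) : ModuleCat.{u} A → Prop :=
  fun X => Function.Surjective (fun φ : Q →ₗ[A] (X : Type u) => φ.comp σ)

/-- A module `T` is silting if it has a projective presentation `σ` with `𝒟_σ = Gen T`. -/
def IsSilting (T : ModuleCat.{u} A) : Prop :=
  ∃ pp : ProjPres T, Dclass pp.σ = GenM T

/-- `T` is partial silting with respect to the projective presentation `pp`. -/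
def IsPartialSiltingWrt {T : ModuleCat.{u} A} (pp : ProjPres T) : Prop :=
  IsTorsionClass (Dclass pp.σ) ∧ Dclass pp.σ T

/-- A presilting presentation: every direct sum of copies of `T` lies in `𝒟_σ`. -/
def IsPresilting {T : ModuleCat.{u} A} (pp : ProjPres T) : Prop :=
  ∀ ι : Type u, Dclass pp.σ (ModuleCat.of A (ι →₀ (T : Type u)))

/-- `X ∈ Add T`: `X` is a direct summand of a direct sum of copies of `T`. -/
def memAdd (T X : ModuleCat.{u} A) : Prop :=
  ∃ (ι : Type u) (i : X →ₗ[A] (ι →₀ (T : Type u))) (r : (ι →₀ (T : Type u)) →ₗ[A] X),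
    r.comp i = LinearMap.id

/-- `f : N → X` is a left `Add T`-approximation. -/
def IsLeftAddApprox (T : ModuleCat.{u} A) {N X : ModuleCat.{u} A} (f : N →ₗ[A] X) : Prop :=
  memAdd T X ∧ ∀ (Z : ModuleCat.{u} A), memAdd T Z → ∀ g : N →ₗ[A] Z,
    ∃ h : X →ₗ[A] Z, h.comp f = g

/-- A submodule `N` of `M` is superfluous if `K ⊔ N = ⊤` implies `K = ⊤`. -/
def IsSuperfluous {M : ModuleCat.{u} A} (N : Submodule A M) : Prop :=
  ∀ K : Submodule A M, K ⊔ N = ⊤ → K = ⊤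

/-- A minimal projective presentation: `π` is a projective cover, and the induced map
`P → Ker π` is a projective cover (equivalently, `Ker σ` is superfluous in `P`). -/
def IsMinimalPres {T : ModuleCat.{u} A} (pp : ProjPres T) : Prop :=
  IsSuperfluous (LinearMap.ker pp.π) ∧ IsSuperfluous (LinearMap.ker pp.σ)

/-- A torsion class in mod-A: a torsion class consisting of finitely generated
(equivalently, over a finite dimensional algebra, finite dimensional) modules. -/
def IsTorsionClassfd (𝒯 : ModuleCat.{u} A → Prop) : Prop :=
  (∀ M, 𝒯 M → Module.Finite A M) ∧ IsoClosed 𝒯 ∧ ClosedUnderQuotients 𝒯 ∧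
    ClosedUnderExtensions 𝒯

/-- A subcategory `𝒳` of mod-A is functorially finite if every finite dimensional module
admits a left and a right `𝒳`-approximation. -/
def FunctoriallyFinite (𝒳 : ModuleCat.{u} A → Prop) : Prop :=
  (∀ N : ModuleCat.{u} A, Module.Finite A N →
    ∃ (X : ModuleCat.{u} A) (f : N →ₗ[A] X), 𝒳 X ∧
      ∀ (X' : ModuleCat.{u} A), 𝒳 X' → ∀ g : N →ₗ[A] X', ∃ h : X →ₗ[A] X', h.comp f = g) ∧
  (∀ N : ModuleCat.{u} A, Module.Finite A N →
    ∃ (X : ModuleCat.{u} A) (f : X →ₗ[A] N), 𝒳 X ∧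
      ∀ (X' : ModuleCat.{u} A), 𝒳 X' → ∀ g : X' →ₗ[A] N, ∃ h : X' →ₗ[A] X, f.comp h = g)

/-- A bireflective subcategory of Mod-A: isomorphism-closed and closed under products,
coproducts, kernels and cokernels. -/
def Bireflective (𝒞 : ModuleCat.{u} A → Prop) : Prop :=
  IsoClosed 𝒞 ∧ ClosedUnderProducts 𝒞 ∧ ClosedUnderDirectSums 𝒞 ∧
    ClosedUnderKernels 𝒞 ∧ ClosedUnderCokernels 𝒞

end Defs


section Aux

variable {A : Type u} [Ring A]

lemma exists_chainmap {M : ModuleCat.{u} A} (p q : ProjPres M) :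
    ∃ (f₀ : p.Q →ₗ[A] q.Q) (f₁ : p.P →ₗ[A] q.P),
      q.π.comp f₀ = p.π ∧ q.σ.comp f₁ = f₀.comp p.σ := by
  haveI := p.projP; haveI := p.projQ
  obtain ⟨f₀, hf₀⟩ := Module.projective_lifting_property q.π p.π q.surj
  have hmem : ∀ x : p.P, f₀ (p.σ x) ∈ LinearMap.range q.σ := by
    intro x
    rw [q.exact, LinearMap.mem_ker]
    have h1 : q.π (f₀ (p.σ x)) = p.π (p.σ x) := congrArg (· x) (congrArg (·.comp p.σ) hf₀)
    rw [h1]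
    have : p.σ x ∈ LinearMap.ker p.π := p.exact ▸ LinearMap.mem_range_self _ x
    exact this
  obtain ⟨f₁, hf₁⟩ := Module.projective_lifting_property q.σ.rangeRestrict
    (LinearMap.codRestrict _ (f₀.comp p.σ) hmem) q.σ.surjective_rangeRestrict
  refine ⟨f₀, f₁, hf₀, ?_⟩
  ext x
  have := congrArg (fun g => ((LinearMap.range q.σ).subtype.comp g) x) hf₁
  simpa using this

end Aux

/-- If `M` admits a minimal projective presentation `p` and some presilting
presentation, then `p` is itself presilting. -/
theorem stmt7 {A : Type u} [Ring A] (M : ModuleCat.{u} A)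
    (p : ProjPres M) (hmin : IsMinimalPres p)
    (hpre : ∃ q : ProjPres M, IsPresilting q) :
    IsPresilting p := by
  obtain ⟨q, hq⟩ := hpre
  obtain ⟨f₀, f₁, hf₀, hf₁⟩ := exists_chainmap p q
  obtain ⟨g₀, g₁, hg₀, hg₁⟩ := exists_chainmap q p
  set h₀ : p.Q →ₗ[A] p.Q := g₀.comp f₀ with hh₀def
  set h₁ : p.P →ₗ[A] p.P := g₁.comp f₁ with hh₁def
  have hπh₀ : ∀ x, p.π (h₀ x) = p.π x := by
    intro x
    have : p.π (g₀ (f₀ x)) = q.π (f₀ x) := congrArg (· (f₀ x)) hg₀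
    rw [hh₀def]
    simp only [LinearMap.comp_apply] at this ⊢
    rw [this]
    exact congrArg (· x) hf₀
  have hσh : ∀ x, p.σ (h₁ x) = h₀ (p.σ x) := by
    intro x
    have e1 : p.σ (g₁ (f₁ x)) = g₀ (q.σ (f₁ x)) := by
      have := congrArg (· (f₁ x)) hg₁; simpa using this
    have e2 : q.σ (f₁ x) = f₀ (p.σ x) := by
      have := congrArg (· x) hf₁; simpa using this
    simp only [hh₀def, hh₁def, LinearMap.comp_apply]
    rw [e1, e2]
  -- h₀ is surjective
  have hh₀surj : Function.Surjective h₀ := by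
    have hsup : LinearMap.range h₀ ⊔ LinearMap.ker p.π = ⊤ := by
      rw [eq_top_iff]
      intro x _
      have hx : x - h₀ x ∈ LinearMap.ker p.π := by
        rw [LinearMap.mem_ker, map_sub, hπh₀, sub_self]
      have : x = h₀ x + (x - h₀ x) := by abel
      rw [this]
      exact Submodule.add_mem_sup (LinearMap.mem_range_self _ x) hx
    have := hmin.1 _ hsup
    rwa [← LinearMap.range_eq_top]
  -- h₀ is injective
  have hh₀inj : Function.Injective h₀ := by
    haveI := p.projQ
    obtain ⟨s, hs⟩ := Module.projective_lifting_property h₀ LinearMap.id hh₀surj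
    have hssurj : Function.Surjective s := by
      have hsup : LinearMap.range s ⊔ LinearMap.ker p.π = ⊤ := by
        rw [eq_top_iff]
        intro x _
        have hx : x - s (h₀ x) ∈ LinearMap.ker p.π := by
          have h1 : h₀ (x - s (h₀ x)) = 0 := by
            rw [map_sub]
            have : h₀ (s (h₀ x)) = h₀ x := congrArg (· (h₀ x)) hs
            rw [this, sub_self]
          rw [LinearMap.mem_ker, ← hπh₀ (x - s (h₀ x)), h1, map_zero]
        have : x = s (h₀ x) + (x - s (h₀ x)) := by abel
        rw [this]
        exact Submodule.add_mem_sup (LinearMap.mem_range_self _ _) hx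
      have := hmin.1 _ hsup
      rwa [← LinearMap.range_eq_top]
    intro x y hxy
    obtain ⟨a, rfl⟩ := hssurj x
    obtain ⟨b, rfl⟩ := hssurj y
    have ha : h₀ (s a) = a := congrArg (· a) hs
    have hb : h₀ (s b) = b := congrArg (· b) hs
    rw [ha, hb] at hxy
    rw [hxy]
  -- h₁ is surjective
  have hh₁surj : Function.Surjective h₁ := by
    have hsup : LinearMap.range h₁ ⊔ LinearMap.ker p.σ = ⊤ := by
      rw [eq_top_iff]
      intro x _
      have hσx : p.σ x ∈ LinearMap.ker p.π := p.exact ▸ LinearMap.mem_range_self _ x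
      obtain ⟨y, hy⟩ := hh₀surj (p.σ x)
      have hyker : y ∈ LinearMap.ker p.π := by
        rw [LinearMap.mem_ker, ← hπh₀, hy]
        exact hσx
      rw [← p.exact] at hyker
      obtain ⟨z, rfl⟩ := hyker
      have : p.σ (h₁ z) = p.σ x := by rw [hσh, hy]
      have hx : x - h₁ z ∈ LinearMap.ker p.σ := by
        rw [LinearMap.mem_ker, map_sub, this, sub_self]
      have hxe : x = h₁ z + (x - h₁ z) := by abel
      rw [hxe]
      exact Submodule.add_mem_sup (LinearMap.mem_range_self _ _) hx
    have := hmin.2 _ hsup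
    rwa [← LinearMap.range_eq_top]
  -- h₁ is injective
  have hh₁inj : Function.Injective h₁ := by
    haveI := p.projP
    obtain ⟨t, ht⟩ := Module.projective_lifting_property h₁ LinearMap.id hh₁surj
    have htsurj : Function.Surjective t := by
      have hsup : LinearMap.range t ⊔ LinearMap.ker p.σ = ⊤ := by
        rw [eq_top_iff]
        intro x _
        have h1 : h₁ (x - t (h₁ x)) = 0 := by
          rw [map_sub]
          have : h₁ (t (h₁ x)) = h₁ x := congrArg (· (h₁ x)) ht
          rw [this, sub_self]
        have hx : x - t (h₁ x) ∈ LinearMap.ker p.σ := by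
          rw [LinearMap.mem_ker]
          apply hh₀inj
          rw [← hσh, h1, map_zero, map_zero]
        have hxe : x = t (h₁ x) + (x - t (h₁ x)) := by abel
        rw [hxe]
        exact Submodule.add_mem_sup (LinearMap.mem_range_self _ _) hx
      have := hmin.2 _ hsup
      rwa [← LinearMap.range_eq_top]
    intro x y hxy
    obtain ⟨a, rfl⟩ := htsurj x
    obtain ⟨b, rfl⟩ := htsurj y
    have ha : h₁ (t a) = a := congrArg (· a) ht
    have hb : h₁ (t b) = b := congrArg (· b) ht
    rw [ha, hb] at hxy
    rw [hxy]
  -- conclude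
  intro ι φ
  set e : p.P ≃ₗ[A] p.P := LinearEquiv.ofBijective h₁ ⟨hh₁inj, hh₁surj⟩ with hedef
  obtain ⟨ψ', hψ'⟩ := hq ι ((φ.comp (e.symm : p.P →ₗ[A] p.P)).comp g₁)
  refine ⟨ψ'.comp f₀, ?_⟩
  simp only at hψ' ⊢
  ext x
  have e2 : q.σ (f₁ x) = f₀ (p.σ x) := by
    have := congrArg (· x) hf₁; simpa using this
  have step : ψ' (q.σ (f₁ x)) = φ (e.symm (g₁ (f₁ x))) := by
    have := congrArg (· (f₁ x)) hψ'; simpa using this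
  have step2 : e.symm (g₁ (f₁ x)) = x := by
    have : h₁ x = g₁ (f₁ x) := rfl
    rw [← this]
    exact e.symm_apply_apply x
  simp only [LinearMap.comp_apply]
  rw [← e2, step, step2]
end

section
/- Let A be a ring and let 𝒯 be a torsion class of right A-modules. Then the class 𝔞(𝒯) := {X ∈ 𝒯 : for every homomorphism g : Y → X with Y ∈ 𝒯, Ker g ∈ 𝒯} is closed under kernels and cokernels of homomorphisms between its modules and under extensions. -/
universe u

open DirectSum

/-- For a torsion class `𝒯`, the class `𝔞(𝒯)` is closed under kernels,
cokernels and extensions. -/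
theorem stmt11 {A : Type u} [Ring A] (𝒯 : ModuleCat.{u} A → Prop)
    (h𝒯 : IsTorsionClass 𝒯) :
    ClosedUnderKernels (aSub 𝒯) ∧ ClosedUnderCokernels (aSub 𝒯) ∧
      ClosedUnderExtensions (aSub 𝒯) := by
  obtain ⟨hiso, hquot, hext, hsum⟩ := h𝒯
  refine ⟨?_, ?_, ?_⟩
  · -- kernels
    intro M N f hM hN
    refine ⟨hN.2 M f hM.1, ?_⟩
    intro Y g hY
    have h1 : 𝒯 (ModuleCat.of A (LinearMap.ker ((LinearMap.ker f).subtype.comp g))) :=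
      hM.2 Y ((LinearMap.ker f).subtype.comp g) hY
    have h2 : LinearMap.ker ((LinearMap.ker f).subtype.comp g) = LinearMap.ker g := by
      rw [LinearMap.ker_comp, Submodule.ker_subtype, Submodule.comap_bot]
    rwa [h2] at h1
  · -- cokernels
    intro M N f hM hN
    set π : (N : Type u) →ₗ[A] (ModuleCat.of A ((N : Type u) ⧸ LinearMap.range f) : Type u) :=
      (LinearMap.range f).mkQ with hπdef
    have hπsurj : Function.Surjective π := Submodule.mkQ_surjective _
    have hT𝒯 : 𝒯 (ModuleCat.of A ((N : Type u) ⧸ LinearMap.range f)) :=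
      hquot N (ModuleCat.of A ((N : Type u) ⧸ LinearMap.range f)) π hπsurj hN.1
    refine ⟨hT𝒯, ?_⟩
    intro Y g hY
    -- the pullback of g and π
    set P : Submodule A (Prod (Y : Type u) (N : Type u)) :=
      LinearMap.ker (g.comp (LinearMap.fst A Y N) - π.comp (LinearMap.snd A Y N)) with hPdef
    have hPmem : ∀ x : Prod (Y : Type u) (N : Type u), x ∈ P ↔ g x.1 = π x.2 := by
      intro x
      simp [hPdef, LinearMap.mem_ker, sub_eq_zero]
    set p₁ : (↥P) →ₗ[A] (Y : Type u) := (LinearMap.fst A Y N).comp P.subtype with hp₁def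
    set p₂ : (↥P) →ₗ[A] (N : Type u) := (LinearMap.snd A Y N).comp P.subtype with hp₂def
    -- ker π = range f belongs to 𝒯
    have hkπ : 𝒯 (ModuleCat.of A (LinearMap.ker π)) := by
      have hr : 𝒯 (ModuleCat.of A (LinearMap.range f)) :=
        hquot M (ModuleCat.of A (LinearMap.range f)) f.rangeRestrict
          f.surjective_rangeRestrict hM.1
      have : LinearMap.ker π = LinearMap.range f := Submodule.ker_mkQ _
      rwa [this]
    -- the inclusion ker π → P
    have hιmem : ∀ x : (LinearMap.ker π), ((LinearMap.inr A (Y : Type u) (N : Type u)).comp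
        (LinearMap.ker π).subtype) x ∈ P := by
      intro x
      rw [hPmem]
      simpa using x.2.symm
    set ι : (↥(LinearMap.ker π)) →ₗ[A] (↥P) :=
      LinearMap.codRestrict P ((LinearMap.inr A (Y : Type u) (N : Type u)).comp
        (LinearMap.ker π).subtype) hιmem with hιdef
    have hιinj : Function.Injective ι := by
      intro a b hab
      have h : LinearMap.inr A (Y : Type u) (N : Type u) a.1
          = LinearMap.inr A (Y : Type u) (N : Type u) b.1 :=
        congrArg Subtype.val hab
      exact Subtype.ext (LinearMap.inr_injective h)
    have hp₁surj : Function.Surjective p₁ := by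
      intro y
      obtain ⟨n, hn⟩ := hπsurj (g y)
      exact ⟨⟨(y, n), (hPmem _).2 hn.symm⟩, rfl⟩
    have hrk : LinearMap.range ι = LinearMap.ker p₁ := by
      ext x
      constructor
      · rintro ⟨n, rfl⟩
        simp [hιdef, hp₁def]
      · intro hx
        have hx1 : (x : Prod (Y : Type u) (N : Type u)).1 = 0 := hx
        have hx2 : π (x : Prod (Y : Type u) (N : Type u)).2 = 0 := by
          have := (hPmem _).1 x.2
          rw [hx1, map_zero] at this
          exact this.symm
        refine ⟨⟨(x : Prod (Y : Type u) (N : Type u)).2, hx2⟩, ?_⟩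
        apply Subtype.ext
        show ((0 : (Y : Type u)), (x : Prod (Y : Type u) (N : Type u)).2)
          = (x : Prod (Y : Type u) (N : Type u))
        rw [← hx1]
    have hP𝒯 : 𝒯 (ModuleCat.of A (↥P)) :=
      hext (ModuleCat.of A (LinearMap.ker π)) (ModuleCat.of A (↥P)) Y ι p₁
        hιinj hp₁surj hrk hkπ hY
    have hkp₂ : 𝒯 (ModuleCat.of A (LinearMap.ker p₂)) :=
      hN.2 (ModuleCat.of A (↥P)) p₂ hP𝒯
    -- ker p₂ ≃ ker g
    have e : (↥(LinearMap.ker p₂)) ≃ₗ[A] (↥(LinearMap.ker g)) :=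
      { toFun := fun x => ⟨(x : ↥P).1.1, by
          have h1 : g (x : ↥P).1.1 = π (x : ↥P).1.2 := (hPmem _).1 (x : ↥P).2
          have h2 : (x : ↥P).1.2 = 0 := x.2
          rw [LinearMap.mem_ker, h1, h2, map_zero]⟩
        map_add' := fun a b => rfl
        map_smul' := fun r a => rfl
        invFun := fun y => ⟨⟨((y : (Y : Type u)), (0 : (N : Type u))), by
            rw [hPmem]
            simpa using y.2⟩, by
          show ((y : (Y : Type u)), (0 : (N : Type u))).2 = 0
          rfl⟩
        left_inv := by
          rintro ⟨⟨⟨a, b⟩, hab⟩, hx⟩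
          have hb : b = 0 := hx
          apply Subtype.ext
          apply Subtype.ext
          show ((a, 0) : Prod (Y : Type u) (N : Type u)) = (a, b)
          rw [hb]
        right_inv := fun y => rfl }
    exact hiso (ModuleCat.of A (LinearMap.ker p₂)) (ModuleCat.of A (LinearMap.ker g)) e hkp₂
  · -- extensions
    intro X Y Z f g hfinj hgsurj hexact hX hZ
    refine ⟨hext X Y Z f g hfinj hgsurj hexact hX.1 hZ.1, ?_⟩
    intro W w hW
    set K : Submodule A (W : Type u) := LinearMap.ker (g.comp w) with hKdef
    have hK𝒯 : 𝒯 (ModuleCat.of A (↥K)) := hZ.2 W (g.comp w) hW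
    have hland : ∀ x : ↥K, (w.comp K.subtype) x ∈ LinearMap.range f := by
      intro x
      rw [hexact, LinearMap.mem_ker]
      exact x.2
    set ψ : (↥K) →ₗ[A] (↥(LinearMap.range f)) :=
      LinearMap.codRestrict (LinearMap.range f) (w.comp K.subtype) hland with hψdef
    set eX := LinearEquiv.ofInjective f hfinj with heXdef
    set φ : (↥K) →ₗ[A] (X : Type u) := (eX.symm : (↥(LinearMap.range f)) →ₗ[A] (X : Type u)).comp ψ
      with hφdef
    have h1 : 𝒯 (ModuleCat.of A (LinearMap.ker φ)) := hX.2 (ModuleCat.of A (↥K)) φ hK𝒯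
    have h2 : LinearMap.ker φ = (LinearMap.ker w).comap K.subtype := by
      rw [hφdef, LinearMap.ker_comp, LinearEquiv.ker, Submodule.comap_bot, hψdef,
        LinearMap.ker_codRestrict, LinearMap.ker_comp]
    rw [h2] at h1
    have hle : LinearMap.ker w ≤ K := LinearMap.ker_le_ker_comp w g
    exact hiso (ModuleCat.of A ((LinearMap.ker w).comap K.subtype))
      (ModuleCat.of A (LinearMap.ker w)) (Submodule.comapSubtypeEquivOfLe hle) h1
end

section
/- Let A be a finite dimensional algebra over an algebraically closed field and let T be a finite dimensional silting A-module. Let X be a finite dimensional module in Gen T such that for every homomorphism g : Y → X with Y finite dimensional and Y ∈ Gen T one has Ker g ∈ Gen T. Then X ∈ 𝔞(Gen T), i.e. for every homomorphism g : Y → X with Y ∈ Gen T (Y an arbitrary, possibly infinite dimensional, module), Ker g ∈ Gen T. -/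
universe u

open DirectSum

/-- Over a finite dimensional algebra, if `T` is a finite dimensional
silting module and `X` is a finite dimensional module in `Gen T` such that kernels of
maps from finite dimensional modules of `Gen T` to `X` lie in `Gen T`, then
`X ∈ 𝔞(Gen T)`. -/
theorem stmt16 {𝕂 : Type u} [Field 𝕂] [IsAlgClosed 𝕂]
    {A : Type u} [Ring A] [Algebra 𝕂 A] [FiniteDimensional 𝕂 A]
    (T : ModuleCat.{u} A) (hTfd : Module.Finite A T) (hTsilt : IsSilting T)
    (X : ModuleCat.{u} A) (hXfd : Module.Finite A X) (hX : GenM T X)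
    (h : ∀ Y : ModuleCat.{u} A, Module.Finite A Y → ∀ g : Y →ₗ[A] X, GenM T Y →
      GenM T (ModuleCat.of A (LinearMap.ker g))) :
    aSub (GenM T) X := by
  classical
  haveI := hTfd
  refine ⟨hX, ?_⟩
  intro Y g hY
  obtain ⟨κ, p, hp⟩ := hY
  set g' : (κ →₀ (T : Type u)) →ₗ[A] X := g.comp p with hg'
  -- It suffices to show that the kernel of g' = g ∘ p lies in GenM T.
  suffices hker' : GenM T (ModuleCat.of A (LinearMap.ker g')) by
    obtain ⟨ι, f, hf⟩ := hker'
    have hrestr : ∀ x ∈ LinearMap.ker g', p x ∈ LinearMap.ker g := by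
      intro x hx
      simpa [hg', LinearMap.mem_ker] using hx
    refine ⟨ι, (p.restrict hrestr).comp f, ?_⟩
    rintro ⟨y, hy⟩
    obtain ⟨x, hx⟩ := hp y
    have hxk : x ∈ LinearMap.ker g' := by
      simp [hg', LinearMap.mem_ker, hx, LinearMap.mem_ker.mp hy]
    obtain ⟨u, hu⟩ := hf ⟨x, hxk⟩
    refine ⟨u, Subtype.ext ?_⟩
    show ((p.restrict hrestr) (f u) : (Y : Type u)) = y
    rw [hu]
    simpa [LinearMap.restrict_apply] using hx
  -- Main part: the kernel of g' : T^(κ) → X is the union of kernels of its restrictions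
  -- to finitely supported pieces, each of which is in GenM T by hypothesis h.
  set Ys : Finset κ → ModuleCat.{u} A :=
    fun s => ModuleCat.of A (Finsupp.supported (T : Type u) A (↑s : Set κ)) with hYs
  set gs : ∀ s : Finset κ, (Ys s : Type u) →ₗ[A] X :=
    fun s => g'.comp (Finsupp.supported (T : Type u) A (↑s : Set κ)).subtype with hgs
  have hYfd : ∀ s, Module.Finite A (Ys s) := by
    intro s
    exact Module.Finite.equiv (Finsupp.supportedEquivFinsupp (↑s : Set κ)).symm
  have hYGen : ∀ s, GenM T (Ys s) := by
    intro s
    exact ⟨(↑s : Set κ), (Finsupp.supportedEquivFinsupp (↑s : Set κ)).symm.toLinearMap,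
      (Finsupp.supportedEquivFinsupp (↑s : Set κ)).symm.surjective⟩
  have hks : ∀ s, GenM T (ModuleCat.of A (LinearMap.ker (gs s))) :=
    fun s => h (Ys s) (hYfd s) (gs s) (hYGen s)
  choose ι ps hps using hks
  -- inclusion of ker (gs s) into ker g'
  have hincl_mem : ∀ (s : Finset κ) (x : LinearMap.ker (gs s)),
      ((Finsupp.supported (T : Type u) A (↑s : Set κ)).subtype.comp
        (LinearMap.ker (gs s)).subtype) x ∈ LinearMap.ker g' := fun s x => x.2
  set incl : ∀ s : Finset κ, (LinearMap.ker (gs s)) →ₗ[A] (LinearMap.ker g') :=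
    fun s => LinearMap.codRestrict (LinearMap.ker g')
      ((Finsupp.supported (T : Type u) A (↑s : Set κ)).subtype.comp
        (LinearMap.ker (gs s)).subtype) (hincl_mem s) with hincl
  set J : Type u := Σ s : Finset κ, ι s with hJ
  set φ : J → ((T : Type u) →ₗ[A] LinearMap.ker g') :=
    fun j => ((incl j.1).comp (ps j.1)).comp (Finsupp.lsingle j.2) with hφ
  set F : (J →₀ (T : Type u)) →ₗ[A] (LinearMap.ker g') := Finsupp.lsum ℕ φ with hF
  refine ⟨J, F, ?_⟩
  have key : ∀ (s : Finset κ) (w : ι s →₀ (T : Type u)),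
      incl s (ps s w) ∈ LinearMap.range F := by
    intro s w
    induction w using Finsupp.induction_linear with
    | zero => simp
    | add f g hf hg =>
      rw [map_add, map_add]
      exact Submodule.add_mem _ hf hg
    | single a b =>
      refine ⟨Finsupp.single ⟨s, a⟩ b, ?_⟩
      rw [hF, Finsupp.lsum_single]
      rfl
  intro x
  obtain ⟨xv, hxk⟩ := x
  set s : Finset κ := xv.support with hs
  have hxs : xv ∈ Finsupp.supported (T : Type u) A (↑s : Set κ) :=
    (Finsupp.mem_supported _ _).mpr subset_rfl
  have hmem : (⟨xv, hxs⟩ : Ys s) ∈ LinearMap.ker (gs s) := hxk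
  obtain ⟨w, hw⟩ := hps s ⟨⟨xv, hxs⟩, hmem⟩
  obtain ⟨v, hv⟩ := key s w
  refine ⟨v, hv.trans ?_⟩
  rw [hw]
  exact Subtype.ext rfl
end
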